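/- Fix n ≥ 1 and ρ ∈ (0,1). Define U(w) = 1 − (w^n/(K + w^{n+1}))², w₊ = (1−ρ^n)/(1−ρ^{n+1}), w₋ = ρ(1−ρ^n)/(1−ρ^{n+1}), and K = (1−ρ)ρ^n(1−ρ^n)^n/(1−ρ^{n+1})^{n+1}. Then U(w₊) = U(w₋) = 0 and w₋/w₊ = ρ. -/
import Mathlib


/-- Zeros of the potential `U(w) = 1 − (wⁿ/(K + w^{n+1}))²` are at
`w₊ = (1−ρⁿ)/(1−ρ^{n+1})` and `w₋ = ρ w₊`, and `w₋/w₊ = ρ`. -/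
theorem potential_zeros (n : ℕ) (hn : 1 ≤ n) (ρ : ℝ) (hρ : ρ ∈ Set.Ioo (0:ℝ) 1) :
    let K : ℝ := (1 - ρ) * ρ ^ n * (1 - ρ ^ n) ^ n / (1 - ρ ^ (n + 1)) ^ (n + 1)
    let U : ℝ → ℝ := fun w => 1 - (w ^ n / (K + w ^ (n + 1))) ^ 2
    let wp : ℝ := (1 - ρ ^ n) / (1 - ρ ^ (n + 1))
    let wm : ℝ := ρ * (1 - ρ ^ n) / (1 - ρ ^ (n + 1))
    U wp = 0 ∧ U wm = 0 ∧ wm / wp = ρ := by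
  intro K U wp wm
  obtain ⟨hρ0, hρ1⟩ := hρ
  have ha : (0:ℝ) < 1 - ρ ^ n := by
    have := pow_lt_one₀ hρ0.le hρ1 (by omega : n ≠ 0)
    linarith
  have hd : (0:ℝ) < 1 - ρ ^ (n + 1) := by
    have := pow_lt_one₀ hρ0.le hρ1 (by omega : n + 1 ≠ 0)
    linarith
  have hwp : (0:ℝ) < wp := div_pos ha hd
  have hwm : (0:ℝ) < wm := div_pos (by positivity) hd
  have hKp : K + wp ^ (n + 1) = wp ^ n := by
    show (1 - ρ) * ρ ^ n * (1 - ρ ^ n) ^ n / (1 - ρ ^ (n + 1)) ^ (n + 1)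
        + ((1 - ρ ^ n) / (1 - ρ ^ (n + 1))) ^ (n + 1)
        = ((1 - ρ ^ n) / (1 - ρ ^ (n + 1))) ^ n
    rw [div_pow, div_pow, div_add_div _ _ (by positivity) (by positivity),
      div_eq_div_iff (by positivity) (by positivity)]
    ring
  have hKm : K + wm ^ (n + 1) = wm ^ n := by
    show (1 - ρ) * ρ ^ n * (1 - ρ ^ n) ^ n / (1 - ρ ^ (n + 1)) ^ (n + 1)
        + (ρ * (1 - ρ ^ n) / (1 - ρ ^ (n + 1))) ^ (n + 1)
        = (ρ * (1 - ρ ^ n) / (1 - ρ ^ (n + 1))) ^ n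
    rw [div_pow, div_pow, mul_pow, mul_pow, div_add_div _ _ (by positivity) (by positivity),
      div_eq_div_iff (by positivity) (by positivity)]
    ring
  refine ⟨?_, ?_, ?_⟩
  · show 1 - (wp ^ n / (K + wp ^ (n + 1))) ^ 2 = 0
    rw [hKp, div_self (by positivity), one_pow, sub_self]
  · show 1 - (wm ^ n / (K + wm ^ (n + 1))) ^ 2 = 0
    rw [hKm, div_self (by positivity), one_pow, sub_self]
  · show ρ * (1 - ρ ^ n) / (1 - ρ ^ (n + 1)) / ((1 - ρ ^ n) / (1 - ρ ^ (n + 1))) = ρ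
    field_simp
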